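/- (Main theorem.) Let E be a finite nonempty linearly ordered set, I an irreflexive symmetric relation on E, and X^• a finite pointed M(E,I)-set with |X| = n+1, such that the action is full and satisfies the rooted-tree condition. Then for every s ≥ 1 there is an isomorphism of abelian groups H_s(A(X^•)) ≅ (H_s(K(E,I)))^{n+1} ⊕ ℤ^{p_s}, where p_s is the number of s-cliques. (In the paper's language: H_s(X_n^•; ℤ) ≅ (H̃_{s−1}(E,𝔐; ℤ))^{n+1} ⊕ ℤ^{p_s}, where H̃ denotes reduced homology of the clique complex of the commutation relation.) -/

import Mathlib

/-!
Common setup: free partially commutative monoid `M(E,I)` data, cliques of the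
commutation relation, the augmented clique chain complex `K(E,I)`, the chain
complexes `A(X^•)` and `B(X^•)` of a pointed `M(E,I)`-set, and their homology.

A pointed `M(E,I)`-set with underlying non-base part `X` is modelled as an
action `act : Option X → E → Option X`, where `none` is the base point `*`.
-/

namespace PCMHomology

variable {E : Type*} [LinearOrder E] [Fintype E]

/-- `S` is a clique for the relation `I`: distinct elements pairwise satisfy `I`. -/
def IsClique (I : E → E → Prop) (S : Finset E) : Prop :=
  ∀ a ∈ S, ∀ b ∈ S, a ≠ b → I a b

/-- The type of `s`-cliques: `s`-element subsets of `E` whose elements pairwise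
commute (satisfy `I`). -/
def Clique (I : E → E → Prop) (s : ℕ) : Type _ :=
  {S : Finset E // S.card = s ∧ IsClique I S}

/-- `p_s`, the number of `s`-cliques. -/
noncomputable def pClique (I : E → E → Prop) (s : ℕ) : ℕ :=
  Nat.card (Clique I s)

/-- Removing an element of an `(s+1)`-clique yields an `s`-clique. -/
def faceClique {I : E → E → Prop} {s : ℕ} (S : Clique I (s + 1))
    (e : {a // a ∈ S.val}) : Clique I s :=
  ⟨S.val.erase e.val, by
    refine ⟨?_, ?_⟩
    · rw [Finset.card_erase_of_mem e.property, S.property.1]; rfl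
    · intro a ha b hb hab
      exact S.property.2 a (Finset.mem_of_mem_erase ha) b
        (Finset.mem_of_mem_erase hb) hab⟩

/-- If `e` is the `k`-th element of the clique `S = {e_1 < ⋯ < e_{s+1}}` then
`posIdx S e = k - 1`, the number of elements of `S` smaller than `e`. -/
def posIdx {I : E → E → Prop} {s : ℕ} (S : Clique I (s + 1))
    (e : {a // a ∈ S.val}) : ℕ :=
  (S.val.filter (fun a => a < e.val)).card

/-- Degree-`s` component of the augmented clique chain complex `K(E,I)`:
the free abelian group on the `s`-cliques. -/
abbrev KC (I : E → E → Prop) (s : ℕ) : Type _ := Clique I s →₀ ℤ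

/-- The differential of `K(E,I)`:
`d (e_1,…,e_{s+1}) = ∑ (-1)^(k+1) (e_1,…,ê_k,…,e_{s+1})`. -/
noncomputable def Kd (I : E → E → Prop) (s : ℕ) : KC I (s + 1) →+ KC I s :=
  Finsupp.liftAddHom fun S => zmultiplesHom _
    (∑ e ∈ S.val.attach,
      ((-1 : ℤ) ^ posIdx S e) • Finsupp.single (faceClique S e) (1 : ℤ))

/-- Degree-`s` component of the chain complex `A(X^•)`: the free abelian group
on pairs `(x, S)` with `x ∈ X^•` (including the base point `* = none`) and `S`
an `s`-clique. -/
abbrev AC (I : E → E → Prop) (X : Type*) (s : ℕ) : Type _ :=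
  (Option X × Clique I s) →₀ ℤ

/-- The differential of `A(X^•)`:
`d (x; e_1,…,e_{s+1}) = ∑ (-1)^k ((x·e_k; …ê_k…) - (x; …ê_k…))`. -/
noncomputable def Ad (I : E → E → Prop) {X : Type*}
    (act : Option X → E → Option X) (s : ℕ) : AC I X (s + 1) →+ AC I X s :=
  Finsupp.liftAddHom fun p => zmultiplesHom _
    (∑ e ∈ p.2.val.attach, ((-1 : ℤ) ^ (posIdx p.2 e + 1)) •
      (Finsupp.single (act p.1 e.val, faceClique p.2 e) (1 : ℤ)
        - Finsupp.single (p.1, faceClique p.2 e) (1 : ℤ)))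

/-- Degree-`s` component of the chain complex `B(X^•)`: the free abelian group
on pairs `(x, S)` with `x ∈ X` (so `x ≠ *`) and `S` an `s`-clique. -/
abbrev BC (I : E → E → Prop) (X : Type*) (s : ℕ) : Type _ :=
  (X × Clique I s) →₀ ℤ

/-- The generator `(x·e; T)` of `B(X^•)`, interpreted as `0` when `x·e = *`. -/
noncomputable def bGen {I : E → E → Prop} {X : Type*} {s : ℕ} (o : Option X) (T : Clique I s) :
    BC I X s :=
  o.elim 0 (fun y => Finsupp.single (y, T) (1 : ℤ))

/-- The differential of `B(X^•)`:
`d (x; e_1,…,e_{s+1}) = ∑ (-1)^k ((x·e_k; …ê_k…) - (x; …ê_k…))`, with a term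
`(x·e_k; T)` interpreted as `0` when `x·e_k = *`. -/
noncomputable def Bd (I : E → E → Prop) {X : Type*}
    (act : Option X → E → Option X) (s : ℕ) : BC I X (s + 1) →+ BC I X s :=
  Finsupp.liftAddHom fun p => zmultiplesHom _
    (∑ e ∈ p.2.val.attach, ((-1 : ℤ) ^ (posIdx p.2 e + 1)) •
      (bGen (act (some p.1) e.val) (faceClique p.2 e)
        - Finsupp.single (p.1, faceClique p.2 e) (1 : ℤ)))

/-- Homology at `C1` of `C2 -d2→ C1 -d1→ C0`: the kernel of `d1` modulo (its
intersection with) the image of `d2`. -/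
abbrev homologyOf {C2 C1 C0 : Type*} [AddCommGroup C2] [AddCommGroup C1]
    [AddCommGroup C0] (d1 : C1 →+ C0) (d2 : C2 →+ C1) : Type _ :=
  d1.ker ⧸ ((d2.range).addSubgroupOf d1.ker)

/-- The homology groups of a nonnegatively graded chain complex `(C, d)`;
in degree `0` this is `C 0 / im (d 0)`. -/
def Hmlgy (C : ℕ → Type*) [∀ n, AddCommGroup (C n)]
    (d : ∀ n, C (n + 1) →+ C n) : ℕ → Type _
  | 0 => homologyOf (0 : C 0 →+ PUnit.{1}) (d 0)
  | (s + 1) => homologyOf (d s) (d (s + 1))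

instance hmlgyAddCommGroup (C : ℕ → Type*) [∀ n, AddCommGroup (C n)]
    (d : ∀ n, C (n + 1) →+ C n) : ∀ s, AddCommGroup (Hmlgy C d s)
  | 0 => inferInstanceAs (AddCommGroup (homologyOf (0 : C 0 →+ PUnit.{1}) (d 0)))
  | (s + 1) => inferInstanceAs (AddCommGroup (homologyOf (d s) (d (s + 1))))

end PCMHomology

set_option linter.unusedSectionVars false
set_option linter.unusedVariables false

namespace PCMHomology

/-! ### Generic homology machinery -/

section Generic
variable {ι : Type*} {C2 C1 C0 C2' C1' C0' : Type*} [AddCommGroup C2] [AddCommGroup C1]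
  [AddCommGroup C0] [AddCommGroup C2'] [AddCommGroup C1'] [AddCommGroup C0']

/-- Restrict an equivalence to kernels. -/
noncomputable def kerCongr (f : C1 →+ C0) (f' : C1' →+ C0') (e1 : C1 ≃+ C1') (e0 : C0 ≃+ C0')
    (h : ∀ x, e0 (f x) = f' (e1 x)) : f.ker ≃+ f'.ker where
  toFun x := ⟨e1 x.1, by
    have hx : f x.1 = 0 := x.2
    rw [AddMonoidHom.mem_ker, ← h, hx, map_zero]⟩
  invFun y := ⟨e1.symm y.1, by
    have hy : f' y.1 = 0 := y.2
    rw [AddMonoidHom.mem_ker]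
    apply e0.injective
    rw [h, e1.apply_symm_apply, hy, map_zero]⟩
  left_inv x := by ext; simp
  right_inv y := by ext; simp
  map_add' x y := by ext; simp

@[simp] lemma kerCongr_apply_coe (f : C1 →+ C0) (f' : C1' →+ C0') (e1 : C1 ≃+ C1')
    (e0 : C0 ≃+ C0') (h : ∀ x, e0 (f x) = f' (e1 x)) (x : f.ker) :
    ((kerCongr f f' e1 e0 h x : f'.ker) : C1') = e1 x.1 := rfl

/-- Chain isomorphisms induce isomorphisms on homology. -/
noncomputable def homologyOfCongr (d1 : C1 →+ C0) (d2 : C2 →+ C1)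
    (d1' : C1' →+ C0') (d2' : C2' →+ C1')
    (e2 : C2 ≃+ C2') (e1 : C1 ≃+ C1') (e0 : C0 ≃+ C0')
    (h1 : ∀ x, e0 (d1 x) = d1' (e1 x)) (h2 : ∀ x, e1 (d2 x) = d2' (e2 x)) :
    homologyOf d1 d2 ≃+ homologyOf d1' d2' :=
  QuotientAddGroup.congr _ _ (kerCongr d1 d1' e1 e0 h1) (by
    ext y
    simp only [AddSubgroup.mem_map, AddSubgroup.mem_addSubgroupOf, AddMonoidHom.mem_range]
    constructor
    · rintro ⟨x, ⟨w, hw⟩, rfl⟩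
      exact ⟨e2 w, by rw [← h2, hw]; rfl⟩
    · rintro ⟨w, hw⟩
      refine ⟨⟨e1.symm y.1, ?_⟩, ⟨e2.symm w, ?_⟩, ?_⟩
      · have hy : d1' y.1 = 0 := y.2
        rw [AddMonoidHom.mem_ker]
        apply e0.injective
        rw [h1, e1.apply_symm_apply, hy, map_zero]
      · apply e1.injective
        rw [h2, e2.apply_symm_apply, e1.apply_symm_apply, hw]
      · ext
        simp )

/-- A homology group is identified by a surjective map from cycles whose kernel
is the boundaries. -/
noncomputable def homologyOfEquivOfSurjective {G : Type*} [AddCommGroup G]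
    (d1 : C1 →+ C0) (d2 : C2 →+ C1) (φ : d1.ker →+ G) (hsurj : Function.Surjective φ)
    (hker : φ.ker = (d2.range).addSubgroupOf d1.ker) :
    homologyOf d1 d2 ≃+ G :=
  (QuotientAddGroup.quotientAddEquivOfEq hker.symm).trans
    (QuotientAddGroup.quotientKerEquivOfSurjective φ hsurj)

/-- Homology of a complex with zero differentials. -/
noncomputable def homologyOfZero :
    homologyOf (0 : C1 →+ C0) (0 : C2 →+ C1) ≃+ C1 := by
  refine homologyOfEquivOfSurjective _ _ (AddMonoidHom.ker (0 : C1 →+ C0)).subtype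
    (fun x => ⟨⟨x, by simp [AddMonoidHom.mem_ker]⟩, rfl⟩) ?_
  ext x
  simp [AddSubgroup.mem_addSubgroupOf, AddMonoidHom.mem_ker]

/-- The pointwise action of a homomorphism on `ι`-tuples. -/
def piHom {A B : Type*} [AddCommGroup A] [AddCommGroup B] (f : A →+ B) :
    (ι → A) →+ (ι → B) where
  toFun v i := f (v i)
  map_zero' := by funext i; simp
  map_add' x y := by funext i; simp

@[simp] lemma piHom_apply {A B : Type*} [AddCommGroup A] [AddCommGroup B] (f : A →+ B)
    (v : ι → A) (i : ι) : piHom f v i = f (v i) := rfl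

/-- Homology of a product (power) complex is the power of the homology. -/
noncomputable def homologyOfPi (d1 : C1 →+ C0) (d2 : C2 →+ C1) :
    homologyOf (piHom (ι := ι) d1) (piHom d2) ≃+ (ι → homologyOf d1 d2) := by
  refine homologyOfEquivOfSurjective _ _
    ({ toFun := fun x i => QuotientAddGroup.mk ⟨x.1 i, by
        have := x.2
        rw [AddMonoidHom.mem_ker] at this ⊢
        exact congrFun this i⟩
       map_zero' := by funext i; exact congrArg _ rfl
       map_add' := by
        intro x y; funext i
        show (QuotientAddGroup.mk _ : homologyOf d1 d2) = QuotientAddGroup.mk _ + QuotientAddGroup.mk _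
        rw [← QuotientAddGroup.mk_add]
        rfl } : (piHom (ι := ι) d1).ker →+ (ι → homologyOf d1 d2)) ?_ ?_
  · intro v
    have : ∀ i, ∃ a : d1.ker, QuotientAddGroup.mk a = v i := fun i =>
      QuotientAddGroup.mk_surjective (v i)
    choose a ha using this
    refine ⟨⟨fun i => (a i).1, ?_⟩, ?_⟩
    · rw [AddMonoidHom.mem_ker]; funext i
      exact (a i).2
    · funext i; exact ha i
  · ext x
    simp only [AddMonoidHom.mem_ker, AddSubgroup.mem_addSubgroupOf, AddMonoidHom.mem_range,
      AddMonoidHom.coe_mk, ZeroHom.coe_mk]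
    constructor
    · intro h
      have h' : ∀ i, ∃ w, d2 w = x.1 i := by
        intro i
        have hm : x.1 i ∈ d1.ker := by
          have := x.2
          rw [AddMonoidHom.mem_ker] at this ⊢
          exact congrFun this i
        have : (QuotientAddGroup.mk ⟨x.1 i, hm⟩ : homologyOf d1 d2) = 0 := by
          simpa using congrFun h i
        rw [QuotientAddGroup.eq_zero_iff, AddSubgroup.mem_addSubgroupOf] at this
        exact this
      choose w hw using h'
      exact ⟨w, funext hw⟩
    · rintro ⟨w, hw⟩
      funext i
      simp only [Pi.zero_apply]
      rw [QuotientAddGroup.eq_zero_iff, AddSubgroup.mem_addSubgroupOf]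
      exact ⟨w i, congrFun hw i⟩

/-- Homology of a binary product complex. -/
noncomputable def homologyOfProd (d1 : C1 →+ C0) (d2 : C2 →+ C1)
    (g1 : C1' →+ C0') (g2 : C2' →+ C1') :
    homologyOf (d1.prodMap g1) (d2.prodMap g2) ≃+ homologyOf d1 d2 × homologyOf g1 g2 := by
  refine homologyOfEquivOfSurjective _ _
    ({ toFun := fun x => (QuotientAddGroup.mk ⟨x.1.1, by
          have := x.2; rw [AddMonoidHom.mem_ker] at this ⊢
          exact congrArg Prod.fst this⟩,
        QuotientAddGroup.mk ⟨x.1.2, by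
          have := x.2; rw [AddMonoidHom.mem_ker] at this ⊢
          exact congrArg Prod.snd this⟩)
       map_zero' := rfl
       map_add' := fun x y => rfl } :
      (d1.prodMap g1).ker →+ homologyOf d1 d2 × homologyOf g1 g2) ?_ ?_
  · rintro ⟨qa, qb⟩
    obtain ⟨a, rfl⟩ := QuotientAddGroup.mk_surjective qa
    obtain ⟨b, rfl⟩ := QuotientAddGroup.mk_surjective qb
    refine ⟨⟨(a.1, b.1), ?_⟩, rfl⟩
    rw [AddMonoidHom.mem_ker]
    exact Prod.ext a.2 b.2
  · ext x
    simp only [AddMonoidHom.mem_ker, AddSubgroup.mem_addSubgroupOf, AddMonoidHom.mem_range,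
      AddMonoidHom.coe_mk, ZeroHom.coe_mk, Prod.mk_eq_zero]
    constructor
    · intro h
      obtain ⟨h1, h2⟩ := Prod.mk_eq_zero.mp h
      rw [QuotientAddGroup.eq_zero_iff, AddSubgroup.mem_addSubgroupOf] at h1 h2
      obtain ⟨w1, hw1⟩ := h1
      obtain ⟨w2, hw2⟩ := h2
      exact ⟨(w1, w2), Prod.ext hw1 hw2⟩
    · rintro ⟨w, hw⟩
      refine Prod.mk_eq_zero.mpr ⟨?_, ?_⟩ <;> rw [QuotientAddGroup.eq_zero_iff, AddSubgroup.mem_addSubgroupOf]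
      · exact ⟨w.1, congrArg Prod.fst hw⟩
      · exact ⟨w.2, congrArg Prod.snd hw⟩


end Generic

/-! ### Finsupp and nilpotent-endomorphism helpers -/

section Helpers
variable {α M : Type*} [AddCommGroup M]

lemma lift1 (v : α → M) (a : α) :
    Finsupp.liftAddHom (fun a => zmultiplesHom M (v a)) (Finsupp.single a 1) = v a := by
  rw [Finsupp.liftAddHom_apply_single, zmultiplesHom_apply, one_zsmul]

lemma genExt {f g : (α →₀ ℤ) →+ M}
    (h : ∀ a, f (Finsupp.single a 1) = g (Finsupp.single a 1)) : f = g := by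
  apply Finsupp.addHom_ext
  intro a y
  have hy : Finsupp.single a y = y • Finsupp.single a (1 : ℤ) := by
    rw [Finsupp.smul_single, smul_eq_mul, mul_one]
  rw [hy, AddMonoidHom.map_zsmul, AddMonoidHom.map_zsmul, h]

/-- A nilpotent perturbation of `-1` is an automorphism. -/
noncomputable def nilUnit (t : AddMonoid.End M) (N : ℕ) (hN : t ^ N = 0) : M ≃+ M where
  toFun a := t a - a
  invFun a := -((∑ i ∈ Finset.range N, t ^ i : AddMonoid.End M) a)
  left_inv a := by
    have h : ((-(∑ i ∈ Finset.range N, t ^ i)) * (t - 1) : AddMonoid.End M) = 1 := by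
      rw [neg_mul, geom_sum_mul, hN, zero_sub, neg_neg]
    have h2 := DFunLike.congr_fun h a
    have e1 : ((-(∑ i ∈ Finset.range N, t ^ i)) * (t - 1) : AddMonoid.End M) a
        = -((∑ i ∈ Finset.range N, t ^ i : AddMonoid.End M) (t a - a)) := rfl
    rw [e1] at h2
    exact h2
  right_inv a := by
    have h : (((t - 1) * (-(∑ i ∈ Finset.range N, t ^ i))) : AddMonoid.End M) = 1 := by
      rw [mul_neg, mul_geom_sum, hN, zero_sub, neg_neg]
    have h2 := DFunLike.congr_fun h a
    exact h2
  map_add' a b := by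
    simp only [map_add]
    abel

lemma nilUnit_apply (t : AddMonoid.End M) (N : ℕ) (hN : t ^ N = 0) (a : M) :
    nilUnit t N hN a = t a - a := rfl

/-- Reindexing a power by an equivalence of the index type. -/
def piReindex {α β M : Type*} [AddCommMonoid M] (e : α ≃ β) : (α → M) ≃+ (β → M) where
  toFun f := f ∘ e.symm
  invFun g := g ∘ e
  left_inv f := by funext a; simp
  right_inv g := by funext b; simp
  map_add' f g := rfl

lemma piHom_pi_single {ι A B : Type*} [DecidableEq ι] [AddCommGroup A] [AddCommGroup B]
    (f : A →+ B) (x : ι) (w : A) : piHom (ι := ι) f (Pi.single x w) = Pi.single x (f w) := by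
  funext y
  rw [piHom_apply]
  rcases eq_or_ne y x with rfl | h
  · rw [Pi.single_eq_same, Pi.single_eq_same]
  · rw [Pi.single_eq_of_ne h, Pi.single_eq_of_ne h, map_zero]

end Helpers

/-! ### The auxiliary complexes and operators -/

section Cx
variable {E : Type*} [LinearOrder E] [Fintype E] (I : E → E → Prop) {X : Type*}
  (act : Option X → E → Option X) (e0 : E)

instance cliqueFinite (s : ℕ) : Finite (Clique I s) :=
  inferInstanceAs (Finite {S : Finset E // S.card = s ∧ IsClique I S})

/-- `D`, the part of the differential of `B(X^•)` not moving the `X`-coordinate. -/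
noncomputable def Dd (s : ℕ) : BC I X (s + 1) →+ BC I X s :=
  Finsupp.liftAddHom fun p => zmultiplesHom _
    (∑ e ∈ p.2.val.attach, ((-1 : ℤ) ^ (posIdx p.2 e + 1)) •
      Finsupp.single (p.1, faceClique p.2 e) (1 : ℤ))

/-- `T`, the shift of the `X`-coordinate by the (full) action. -/
noncomputable def Tt (s : ℕ) : AddMonoid.End (BC I X s) :=
  Finsupp.liftAddHom fun p => zmultiplesHom _ (bGen (act (some p.1) e0) p.2)

/-- First component of the splitting `A(X^•) ≅ K(E,I) × B(X^•)`. -/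
noncomputable def phi1 (s : ℕ) : AC I X s →+ KC I s :=
  Finsupp.liftAddHom fun p => zmultiplesHom _ (Finsupp.single p.2 (1 : ℤ))

/-- Second component of the splitting `A(X^•) ≅ K(E,I) × B(X^•)`. -/
noncomputable def phi2 (s : ℕ) : AC I X s →+ BC I X s :=
  Finsupp.liftAddHom fun p => zmultiplesHom _ (bGen p.1 p.2)

noncomputable def psi1 (s : ℕ) : KC I s →+ AC I X s :=
  Finsupp.liftAddHom fun S => zmultiplesHom _ (Finsupp.single ((none : Option X), S) (1 : ℤ))

noncomputable def psi2 (s : ℕ) : BC I X s →+ AC I X s :=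
  Finsupp.liftAddHom fun p => zmultiplesHom _
    (Finsupp.single ((some p.1 : Option X), p.2) (1 : ℤ) - Finsupp.single (none, p.2) (1 : ℤ))

variable {I act}

@[simp] lemma bGen_none (T : Clique I 0) : True := trivial

lemma Kd_single (s : ℕ) (S : Clique I (s + 1)) :
    Kd I s (Finsupp.single S 1) =
      ∑ e ∈ S.val.attach, ((-1 : ℤ) ^ posIdx S e) •
        Finsupp.single (faceClique S e) (1 : ℤ) := by
  unfold Kd; exact lift1 _ _

lemma Ad_single (s : ℕ) (o : Option X) (S : Clique I (s + 1)) :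
    Ad I act s (Finsupp.single (o, S) 1) =
      ∑ e ∈ S.val.attach, ((-1 : ℤ) ^ (posIdx S e + 1)) •
        (Finsupp.single (act o e.val, faceClique S e) (1 : ℤ)
          - Finsupp.single (o, faceClique S e) (1 : ℤ)) := by
  unfold Ad; exact lift1 _ _

lemma Bd_single (s : ℕ) (x : X) (S : Clique I (s + 1)) :
    Bd I act s (Finsupp.single (x, S) 1) =
      ∑ e ∈ S.val.attach, ((-1 : ℤ) ^ (posIdx S e + 1)) •
        (bGen (act (some x) e.val) (faceClique S e)
          - Finsupp.single (x, faceClique S e) (1 : ℤ)) := by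
  unfold Bd; exact lift1 _ _

lemma Dd_single (s : ℕ) (x : X) (S : Clique I (s + 1)) :
    Dd I (X := X) s (Finsupp.single (x, S) 1) =
      ∑ e ∈ S.val.attach, ((-1 : ℤ) ^ (posIdx S e + 1)) •
        Finsupp.single (x, faceClique S e) (1 : ℤ) := by
  unfold Dd; exact lift1 _ _

lemma Tt_single (s : ℕ) (x : X) (S : Clique I s) :
    Tt I act e0 s (Finsupp.single (x, S) 1) = bGen (act (some x) e0) S := by
  unfold Tt; exact lift1 _ _

lemma phi1_single (s : ℕ) (o : Option X) (S : Clique I s) :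
    phi1 I (X := X) s (Finsupp.single (o, S) 1) = Finsupp.single S 1 := by
  unfold phi1; exact lift1 _ _

lemma phi2_single (s : ℕ) (o : Option X) (S : Clique I s) :
    phi2 I (X := X) s (Finsupp.single (o, S) 1) = bGen o S := by
  unfold phi2; exact lift1 _ _

lemma psi1_single (s : ℕ) (S : Clique I s) :
    psi1 I (X := X) s (Finsupp.single S 1) = Finsupp.single (none, S) 1 := by
  unfold psi1; exact lift1 _ _

lemma psi2_single (s : ℕ) (x : X) (S : Clique I s) :
    psi2 I (X := X) s (Finsupp.single (x, S) 1) =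
      Finsupp.single (some x, S) 1 - Finsupp.single (none, S) 1 := by
  unfold psi2; exact lift1 _ _

@[simp] lemma bGen_none' (T : Clique I s') : (bGen (none : Option X) T : BC I X s') = 0 := rfl

@[simp] lemma bGen_some (y : X) (T : Clique I s') :
    (bGen (some y) T : BC I X s') = Finsupp.single (y, T) 1 := rfl

lemma Tt_bGen (hstar : ∀ e, act none e = none) (s : ℕ) (o : Option X) (T : Clique I s) :
    Tt I act e0 s (bGen o T) = bGen (act o e0) T := by
  cases o with
  | none => rw [bGen_none', map_zero, hstar, bGen_none']
  | some y => rw [bGen_some, Tt_single]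

lemma Tt_pow_bGen (hstar : ∀ e, act none e = none) (s k : ℕ) (o : Option X) (T : Clique I s) :
    ((Tt I act e0 s) ^ k) (bGen o T) = bGen ((fun o => act o e0)^[k] o) T := by
  induction k with
  | zero => rw [pow_zero, AddMonoid.End.one_apply, Function.iterate_zero_apply]
  | succ k ih =>
      rw [pow_succ' (Tt I act e0 s) k]
      show Tt I act e0 s (((Tt I act e0 s) ^ k) (bGen o T)) = _
      rw [ih, Tt_bGen (e0 := e0) hstar, Function.iterate_succ_apply']

lemma Dd_bGen (s : ℕ) (o : Option X) (S : Clique I (s + 1)) :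
    Dd I (X := X) s (bGen o S) =
      ∑ e ∈ S.val.attach, ((-1 : ℤ) ^ (posIdx S e + 1)) • bGen o (faceClique S e) := by
  cases o with
  | none => simp
  | some y => rw [bGen_some, Dd_single]; simp

lemma end_sub_apply' {M : Type*} [AddCommGroup M] (f g : AddMonoid.End M) (a : M) :
    (f - g) a = f a - g a := rfl

lemma end_one_apply' {M : Type*} [AddCommGroup M] (a : M) :
    (1 : AddMonoid.End M) a = a := rfl

lemma Bd_eq (hfull : ∀ o e e', act o e = act o e') (s : ℕ) :
    Bd I act s = (Dd I s).comp
      ((Tt I act e0 (s + 1) - 1 : AddMonoid.End (BC I X (s + 1)))) := by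
  apply genExt
  rintro ⟨x, S⟩
  show _ = Dd I s ((Tt I act e0 (s + 1) - 1 : AddMonoid.End (BC I X (s + 1))) (Finsupp.single (x, S) 1))
  rw [end_sub_apply', end_one_apply', Tt_single,
    map_sub, Dd_bGen, Dd_single, Bd_single, ← Finset.sum_sub_distrib]
  apply Finset.sum_congr rfl
  intro e _
  rw [← smul_sub, hfull (some x) e.val e0]

lemma TD_comm (s : ℕ) :
    ((Tt I act e0 s : BC I X s →+ BC I X s)).comp (Dd I s)
      = (Dd I s).comp (Tt I act e0 (s + 1)) := by
  apply genExt
  rintro ⟨x, S⟩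
  show Tt I act e0 s (Dd I s (Finsupp.single (x, S) 1)) = Dd I s (Tt I act e0 (s + 1) (Finsupp.single (x, S) 1))
  rw [Tt_single, Dd_bGen, Dd_single,
    map_sum]
  apply Finset.sum_congr rfl
  intro e _
  rw [map_zsmul, Tt_single]

lemma uDd_comm (s : ℕ) (a : BC I X (s + 1)) :
    Tt I act e0 s (Dd I s a) - Dd I s a
      = Dd I s (Tt I act e0 (s + 1) a - a) := by
  have := DFunLike.congr_fun (TD_comm (I := I) (act := act) (e0 := e0) s) a
  change Tt I act e0 s (Dd I s a) = Dd I s (Tt I act e0 (s + 1) a) at this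
  rw [map_sub, this]

lemma psi_phi (s : ℕ) :
    (psi1 I s).comp (phi1 I (X := X) s) + (psi2 I s).comp (phi2 I s)
      = AddMonoidHom.id _ := by
  apply genExt
  rintro ⟨o, S⟩
  rcases o with _ | x <;>
    simp only [AddMonoidHom.add_apply, AddMonoidHom.comp_apply, AddMonoidHom.id_apply,
      phi1_single, phi2_single, psi1_single, psi2_single, bGen_none', bGen_some, map_zero] <;>
    abel

lemma phi1_psi1 (s : ℕ) : (phi1 I (X := X) s).comp (psi1 I s) = AddMonoidHom.id _ := by
  apply genExt
  intro S
  simp only [AddMonoidHom.comp_apply, AddMonoidHom.id_apply, psi1_single, phi1_single]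

lemma phi1_psi2 (s : ℕ) : (phi1 I (X := X) s).comp (psi2 I s) = 0 := by
  apply genExt
  rintro ⟨x, S⟩
  simp only [AddMonoidHom.comp_apply, psi2_single, map_sub, phi1_single, sub_self,
    AddMonoidHom.zero_apply]

lemma phi2_psi1 (s : ℕ) : (phi2 I (X := X) s).comp (psi1 I s) = 0 := by
  apply genExt
  intro S
  simp only [AddMonoidHom.comp_apply, psi1_single, phi2_single, bGen_none',
    AddMonoidHom.zero_apply]

lemma phi2_psi2 (s : ℕ) : (phi2 I (X := X) s).comp (psi2 I s) = AddMonoidHom.id _ := by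
  apply genExt
  rintro ⟨x, S⟩
  simp only [AddMonoidHom.comp_apply, AddMonoidHom.id_apply, psi2_single, map_sub,
    phi2_single, bGen_none', bGen_some, sub_zero]

/-- The splitting `A(X^•) ≅ K(E,I) × B(X^•)` (as graded groups). -/
noncomputable def phiEquiv (s : ℕ) : AC I X s ≃+ KC I s × BC I X s where
  toFun a := (phi1 I s a, phi2 I s a)
  invFun pr := psi1 I s pr.1 + psi2 I s pr.2
  left_inv a := by
    have h := DFunLike.congr_fun (psi_phi (I := I) (X := X) s) a
    simpa only [AddMonoidHom.add_apply, AddMonoidHom.comp_apply, AddMonoidHom.id_apply] using h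
  right_inv pr := by
    obtain ⟨a, b⟩ := pr
    have h11 := DFunLike.congr_fun (phi1_psi1 (I := I) (X := X) s) a
    have h12 := DFunLike.congr_fun (phi1_psi2 (I := I) (X := X) s) b
    have h21 := DFunLike.congr_fun (phi2_psi1 (I := I) (X := X) s) a
    have h22 := DFunLike.congr_fun (phi2_psi2 (I := I) (X := X) s) b
    simp only [AddMonoidHom.comp_apply, AddMonoidHom.id_apply, AddMonoidHom.zero_apply]
      at h11 h12 h21 h22
    refine Prod.ext ?_ ?_ <;> simp only [map_add, h11, h12, h21, h22]
    · exact add_zero a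
    · exact zero_add b
  map_add' a b := by
    show (phi1 I s (a + b), phi2 I s (a + b))
      = (phi1 I s a, phi2 I s a) + (phi1 I s b, phi2 I s b)
    rw [map_add, map_add, Prod.mk_add_mk]

lemma phiEquiv_apply (s : ℕ) (a : AC I X s) :
    phiEquiv (I := I) (X := X) s a = (phi1 I s a, phi2 I s a) := rfl

lemma phi1_Ad (s : ℕ) : (phi1 I (X := X) s).comp (Ad I act s) = 0 := by
  apply genExt
  rintro ⟨o, S⟩
  rw [AddMonoidHom.comp_apply, Ad_single, map_sum, AddMonoidHom.zero_apply]
  refine Finset.sum_eq_zero fun e _ => ?_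
  rw [AddMonoidHom.map_zsmul, map_sub, phi1_single, phi1_single, sub_self, smul_zero]

lemma phi2_Ad (hstar : ∀ e, act none e = none) (s : ℕ) :
    (phi2 I (X := X) s).comp (Ad I act s) = (Bd I act s).comp (phi2 I (s + 1)) := by
  apply genExt
  rintro ⟨o, S⟩
  rw [AddMonoidHom.comp_apply, AddMonoidHom.comp_apply, Ad_single, map_sum, phi2_single]
  cases o with
  | none =>
      rw [bGen_none', map_zero]
      refine Finset.sum_eq_zero fun e _ => ?_
      rw [AddMonoidHom.map_zsmul, map_sub, phi2_single, phi2_single, hstar]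
      simp
  | some x =>
      rw [bGen_some, Bd_single]
      refine Finset.sum_congr rfl fun e _ => ?_
      rw [AddMonoidHom.map_zsmul, map_sub, phi2_single, phi2_single, bGen_some]

section Omega
variable [Finite X]

/-- The splitting `B(X^•) ≅ K(E,I)^X` (as graded groups). -/
noncomputable def omegaEquiv (s : ℕ) : BC I X s ≃+ (X → KC I s) :=
  ((Finsupp.finsuppProdLEquiv ℤ).trans
    (Finsupp.linearEquivFunOnFinite ℤ (KC I s) X)).toAddEquiv

lemma omegaEquiv_single [DecidableEq X] (s : ℕ) (x : X) (S : Clique I s) :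
    omegaEquiv (I := I) (X := X) s (Finsupp.single (x, S) 1)
      = Pi.single x (Finsupp.single S 1) := by
  have hcur : (Finsupp.finsuppProdLEquiv ℤ) (Finsupp.single ((x, S) : X × Clique I s) (1 : ℤ))
      = Finsupp.single x (Finsupp.single S 1) := by
    ext y T
    show (Finsupp.single ((x, S) : X × Clique I s) (1 : ℤ)) (y, T) = _
    rcases eq_or_ne y x with rfl | hy
    · rw [Finsupp.single_eq_same]
      rcases eq_or_ne T S with rfl | hT
      · rw [Finsupp.single_eq_same, Finsupp.single_eq_same]
      · rw [Finsupp.single_eq_of_ne' hT.symm, Finsupp.single_eq_of_ne']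
        intro h
        exact hT (congrArg Prod.snd h).symm
    · rw [Finsupp.single_eq_of_ne' hy.symm, Finsupp.coe_zero, Pi.zero_apply,
        Finsupp.single_eq_of_ne']
      intro h
      exact hy (congrArg Prod.fst h).symm
  show (Finsupp.linearEquivFunOnFinite ℤ (KC I s) X)
      ((Finsupp.finsuppProdLEquiv ℤ) (Finsupp.single (x, S) 1)) = _
  rw [hcur, Finsupp.linearEquivFunOnFinite_single]

lemma omega_Dd [DecidableEq X] (s : ℕ) (a : BC I X (s + 1)) :
    omegaEquiv (I := I) (X := X) s (Dd I s a)
      = piHom (-(Kd I s)) (omegaEquiv (s + 1) a) := by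
  have key : ((omegaEquiv (I := I) (X := X) s).toAddMonoidHom.comp (Dd I s))
      = (piHom (-(Kd I s))).comp (omegaEquiv (s + 1)).toAddMonoidHom := by
    apply genExt
    rintro ⟨x, S⟩
    rw [AddMonoidHom.comp_apply, AddMonoidHom.comp_apply, AddEquiv.coe_toAddMonoidHom,
      AddEquiv.coe_toAddMonoidHom, Dd_single, omegaEquiv_single, piHom_pi_single, map_sum]
    have hsingle : ∀ w : KC I s, (Pi.single x w : X → KC I s)
        = AddMonoidHom.single (fun _ : X => KC I s) x w := fun _ => rfl
    rw [hsingle]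
    rw [show (-(Kd I s)) (Finsupp.single S 1) = ∑ e ∈ S.val.attach,
        ((-1 : ℤ) ^ (posIdx S e + 1)) • Finsupp.single (faceClique S e) (1 : ℤ) by
      rw [AddMonoidHom.neg_apply, Kd_single, ← Finset.sum_neg_distrib]
      refine Finset.sum_congr rfl fun e _ => ?_
      rw [pow_succ, mul_neg_one, neg_smul]]
    rw [map_sum]
    refine Finset.sum_congr rfl fun e _ => ?_
    rw [map_zsmul, omegaEquiv_single, hsingle, AddMonoidHom.map_zsmul]
  have := DFunLike.congr_fun key a
  rwa [AddMonoidHom.comp_apply, AddMonoidHom.comp_apply, AddEquiv.coe_toAddMonoidHom,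
    AddEquiv.coe_toAddMonoidHom] at this

end Omega

/-- `K_s(E,I)` is free of rank `p_s`. -/
noncomputable def kcFinEquiv (s : ℕ) : KC I s ≃+ (Fin (pClique I s) → ℤ) :=
  (Finsupp.linearEquivFunOnFinite ℤ ℤ (Clique I s)).toAddEquiv.trans
    (piReindex (Finite.equivFinOfCardEq (rfl : Nat.card (Clique I s) = pClique I s)))


end Cx

end PCMHomology

namespace PCMHomology

/-- **Main theorem.** Let `X^•` be a finite pointed
`M(E,I)`-set with `|X| = n + 1`, with full action satisfying the rooted-tree
condition. Then for every `s ≥ 1`,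
`H_s(A(X^•)) ≅ (H_s(K(E,I)))^{n+1} ⊕ ℤ^{p_s}`, where `p_s` is the number of
`s`-cliques; that is, `H_s(X_n^•; ℤ) ≅ (H̃_{s-1}(E,𝔐; ℤ))^{n+1} ⊕ ℤ^{p_s}`. -/
theorem stmt8 {E : Type*} [LinearOrder E] [Fintype E] [Nonempty E]
    (I : E → E → Prop) (hirr : ∀ e, ¬ I e e) (hsym : ∀ e e', I e e' → I e' e)
    (X : Type*) [Fintype X] (n : ℕ) (hcard : Fintype.card X = n + 1)
    (act : Option X → E → Option X)
    (hstar : ∀ e, act none e = none)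
    (hcomm : ∀ o e e', I e e' → act (act o e) e' = act (act o e') e)
    (hfull : ∀ o e e', act o e = act o e')
    (e0 : E)
    (htree : ∀ x : X, ∃ k : ℕ, (fun o => act o e0)^[k] (some x) = none) :
    ∀ s : ℕ, 1 ≤ s → Nonempty
      (Hmlgy (AC I X) (Ad I act) s ≃+
        (Fin (n + 1) → Hmlgy (KC I) (Kd I) s) × (Fin (pClique I s) → ℤ)) := by
  classical
  intro s hs
  obtain ⟨m, rfl⟩ : ∃ m, s = m + 1 := ⟨s - 1, (Nat.succ_pred_eq_of_pos hs).symm⟩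
  -- a uniform nilpotency bound for the shift operator
  obtain ⟨N, hNall⟩ : ∃ N, ∀ x : X, (fun o => act o e0)^[N] (some x) = none := by
    choose k hk using htree
    refine ⟨Finset.univ.sup k, fun x => ?_⟩
    obtain ⟨c, hc⟩ := Nat.exists_eq_add_of_le (Finset.le_sup (f := k) (Finset.mem_univ x))
    rw [hc, Nat.add_comm, Function.iterate_add_apply, hk x]
    exact Function.iterate_fixed (hstar e0) c
  have hTnil : ∀ t : ℕ, (Tt I act e0 t : AddMonoid.End (BC I X t)) ^ N = 0 := by
    intro t
    have h : ((Tt I act e0 t ^ N : AddMonoid.End (BC I X t)) : BC I X t →+ BC I X t)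
        = (0 : BC I X t →+ BC I X t) := by
      apply genExt
      rintro ⟨x, S⟩
      have h1 := Tt_pow_bGen (I := I) (act := act) (e0 := e0) hstar t N (some x) S
      rw [bGen_some] at h1
      show ((Tt I act e0 t ^ N : AddMonoid.End (BC I X t)) (Finsupp.single (x, S) 1)) = 0
      rw [h1, hNall x, bGen_none']
    exact h
  let u : ∀ t : ℕ, BC I X t ≃+ BC I X t := fun t => nilUnit (Tt I act e0 t) N (hTnil t)
  have hu : ∀ t (a : BC I X t), u t a = Tt I act e0 t a - a := fun t a => rfl
  -- pointwise form of the decomposition of the differential of B(X^•)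
  have hBd : ∀ t (a : BC I X (t + 1)), Bd I act t a = Dd I t (u (t + 1) a) := by
    intro t a
    have := DFunLike.congr_fun (Bd_eq (I := I) (act := act) (e0 := e0) hfull t) a
    change Bd I act t a = Dd I t ((Tt I act e0 (t + 1) - 1 : AddMonoid.End (BC I X (t + 1))) a) at this
    rw [end_sub_apply', end_one_apply'] at this
    rw [this, hu]
  refine ⟨?_⟩
  have E1 : homologyOf (Ad I act m) (Ad I act (m + 1)) ≃+
      homologyOf ((0 : KC I (m + 1) →+ KC I m).prodMap (Bd I act m))
        ((0 : KC I (m + 2) →+ KC I (m + 1)).prodMap (Bd I act (m + 1))) := by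
    refine homologyOfCongr _ _ _ _ (phiEquiv (m + 2)) (phiEquiv (m + 1)) (phiEquiv m)
      ?_ ?_ <;>
    · intro a
      rw [phiEquiv_apply, phiEquiv_apply]
      refine Prod.ext ?_ ?_
      · have h := DFunLike.congr_fun (phi1_Ad (I := I) (act := act) _) a
        rw [AddMonoidHom.comp_apply, AddMonoidHom.zero_apply] at h
        exact h
      · have h := DFunLike.congr_fun (phi2_Ad (I := I) (act := act) hstar _) a
        rw [AddMonoidHom.comp_apply, AddMonoidHom.comp_apply] at h
        exact h
  have E4 : homologyOf (Bd I act m) (Bd I act (m + 1)) ≃+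
      homologyOf (Dd I (X := X) m) (Dd I (m + 1)) := by
    refine homologyOfCongr _ _ _ _ ((u (m + 2)).trans (u (m + 2))) (u (m + 1))
      (AddEquiv.refl _) ?_ ?_
    · intro a
      rw [AddEquiv.coe_refl, id_eq, hBd]
    · intro a
      rw [AddEquiv.trans_apply, hBd]
      generalize u (m + 2) a = b
      rw [hu, hu]
      exact uDd_comm (I := I) (act := act) (e0 := e0) (m + 1) b
  have E5 : homologyOf (Dd I (X := X) m) (Dd I (m + 1)) ≃+
      homologyOf (piHom (ι := X) (-(Kd I m))) (piHom (-(Kd I (m + 1)))) :=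
    homologyOfCongr _ _ _ _ (omegaEquiv (m + 2)) (omegaEquiv (m + 1)) (omegaEquiv m)
      (fun a => omega_Dd m a) (fun a => omega_Dd (m + 1) a)
  have E7 : homologyOf (-(Kd I m)) (-(Kd I (m + 1))) ≃+
      homologyOf (Kd I m) (Kd I (m + 1)) := by
    refine homologyOfCongr _ _ _ _ (AddEquiv.refl _) (AddEquiv.neg _) (AddEquiv.refl _)
      ?_ ?_
    · intro a
      rw [AddEquiv.coe_refl, id_eq, AddMonoidHom.neg_apply, AddEquiv.neg_apply, map_neg]
    · intro a
      rw [AddEquiv.coe_refl, id_eq, AddEquiv.neg_apply, AddMonoidHom.neg_apply, neg_neg]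
  have E3 : homologyOf (0 : KC I (m + 1) →+ KC I m) (0 : KC I (m + 2) →+ KC I (m + 1)) ≃+
      (Fin (pClique I (m + 1)) → ℤ) :=
    homologyOfZero.trans (kcFinEquiv (m + 1))
  have E8 : (X → homologyOf (Kd I m) (Kd I (m + 1))) ≃+
      (Fin (n + 1) → homologyOf (Kd I m) (Kd I (m + 1))) :=
    piReindex (Fintype.equivFinOfCardEq hcard)
  exact E1.trans ((homologyOfProd _ _ _ _).trans
    ((AddEquiv.prodCongr E3
      (E4.trans (E5.trans ((homologyOfPi _ _).trans
        ((AddEquiv.piCongrRight fun _ => E7).trans E8))))).trans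
      AddEquiv.prodComm))

end PCMHomology
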